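/- If f is an irreducible factor of X^n + X + 1 over F₂ and f̂ is its hat-polynomial, then f̂/X divides X^{2^n − 1} + X + 1 in F₂[X]. -/
import Mathlib


open Polynomial

/-- The hat-polynomial (linearized polynomial) of `f = Σ aᵢ Xⁱ` is `f̂ = Σ aᵢ X^(2^i)`. -/
noncomputable def hat (f : (ZMod 2)[X]) : (ZMod 2)[X] :=
  f.sum fun i a => C a * X ^ 2 ^ i

lemma hat_monomial (k : ℕ) (a : ZMod 2) : hat (monomial k a) = C a * X ^ 2 ^ k := by
  unfold hat
  rw [Polynomial.sum_monomial_index]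
  simp

lemma hat_add (f g : (ZMod 2)[X]) : hat (f + g) = hat f + hat g := by
  unfold hat
  rw [Polynomial.sum_add_index] <;> intros <;> simp [add_mul]

lemma hat_C_mul (a : ZMod 2) (f : (ZMod 2)[X]) : hat (C a * f) = C a * hat f := by
  rcases (by decide : ∀ a : ZMod 2, a = 0 ∨ a = 1) a with h | h <;> subst h <;>
    simp [hat, Polynomial.sum_zero_index]

lemma two_eq_zero : (2 : (ZMod 2)[X]) = 0 := by
  have h : (2 : (ZMod 2)[X]) = C 1 + C 1 := by rw [C_1]; ring
  rw [h, ← C_add, show (1 + 1 : ZMod 2) = 0 from by decide, C_0]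

lemma sq_add (p q : (ZMod 2)[X]) : (p + q) ^ 2 = p ^ 2 + q ^ 2 := by
  have h : (2 : (ZMod 2)[X]) = 0 := two_eq_zero
  rw [add_sq, show 2 * p * q = 0 by rw [h]; ring]
  ring

lemma hat_X_mul (g : (ZMod 2)[X]) : hat (X * g) = (hat g) ^ 2 := by
  induction g using Polynomial.induction_on' with
  | add p q hp hq =>
      rw [mul_add, hat_add, hp, hq, hat_add, sq_add]
  | monomial k a =>
      have h : X * monomial k a = monomial (k + 1) a := by
        rw [← C_mul_X_pow_eq_monomial, ← C_mul_X_pow_eq_monomial]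
        ring
      rw [h, hat_monomial, hat_monomial, mul_pow, ← C_pow, ZMod.pow_card a,
        ← pow_mul, pow_succ]

lemma hat_X_pow_mul (k : ℕ) (g : (ZMod 2)[X]) : hat (X ^ k * g) = (hat g) ^ 2 ^ k := by
  induction k with
  | zero => simp
  | succ k ih =>
      rw [pow_succ, mul_comm (X ^ k) X, mul_assoc, hat_X_mul, ih, ← pow_mul, pow_succ]

lemma hat_X_pow (k : ℕ) : hat (X ^ k : (ZMod 2)[X]) = X ^ 2 ^ k := by
  have : (X ^ k : (ZMod 2)[X]) = monomial k 1 := by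
    rw [← C_mul_X_pow_eq_monomial]; simp
  rw [this, hat_monomial]; simp

lemma hat_mul (f g : (ZMod 2)[X]) : hat (f * g) = (hat f).comp (hat g) := by
  induction f using Polynomial.induction_on' with
  | add p q hp hq => rw [add_mul, hat_add, hp, hq, hat_add, add_comp]
  | monomial k a =>
      rw [← C_mul_X_pow_eq_monomial, mul_assoc, hat_C_mul (f := X ^ k * g), hat_X_pow_mul,
        hat_C_mul, hat_X_pow, mul_comp, C_comp, pow_comp, X_comp]

lemma X_dvd_hat (f : (ZMod 2)[X]) : X ∣ hat f := by
  unfold hat Polynomial.sum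
  exact Finset.dvd_sum fun i _ =>
    Dvd.dvd.mul_left (dvd_pow_self X (pow_ne_zero i two_ne_zero)) _

lemma hat_one : hat (1 : (ZMod 2)[X]) = X := by
  have := hat_X_pow 0
  simpa using this

theorem stmt_19 (n : ℕ) (hn : 2 ≤ n) (f : (ZMod 2)[X]) (hirr : Irreducible f)
    (hdvd : f ∣ X ^ n + X + 1) :
    ∃ q : (ZMod 2)[X], hat f = X * q ∧ q ∣ X ^ (2 ^ n - 1) + X + 1 := by
  obtain ⟨g, hg⟩ := hdvd
  obtain ⟨q, hq⟩ := X_dvd_hat f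
  obtain ⟨q', hq'⟩ := X_dvd_hat g
  refine ⟨q, hq, ⟨q'.comp (X * q), ?_⟩⟩
  have key : hat (X ^ n + X + 1 : (ZMod 2)[X]) = (hat g).comp (hat f) := by
    rw [hg, mul_comm, hat_mul]
  have lhs : hat (X ^ n + X + 1 : (ZMod 2)[X]) = X * (X ^ (2 ^ n - 1) + X + 1) := by
    have h1 : hat (X : (ZMod 2)[X]) = X ^ 2 := by
      have := hat_X_pow 1; simpa using this
    rw [hat_add, hat_add, hat_X_pow, h1, hat_one]
    have h2 : (X : (ZMod 2)[X]) * X ^ (2 ^ n - 1) = X ^ 2 ^ n := by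
      rw [← pow_succ', Nat.sub_add_cancel (Nat.one_le_two_pow)]
    rw [mul_add, mul_add, h2]
    ring
  rw [lhs, hq, hq', mul_comp, X_comp] at key
  have : X * (X ^ (2 ^ n - 1) + X + 1) = X * (q * q'.comp (X * q)) := by
    rw [key]; ring
  have := mul_left_cancel₀ (X_ne_zero : (X : (ZMod 2)[X]) ≠ 0) this
  rw [this]
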